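/- Let g : ℝ → ℝ be twice continuously differentiable with g, g', g'' ∈ L²(ℝ) and with g(x) and g'(x) tending to 0 as |x| → ∞. Then ∫_ℝ |g'(x)| · |g''(x)|² dx ≤ √2 · ‖g'‖_{L²}^{1/2} · ‖g''‖_{L²}^{5/2} ≤ √2 · ‖g‖_{L²}^{1/4} · ‖g''‖_{L²}^{11/4}. -/

import Mathlib

open MeasureTheory Filter Set intervalIntegral

/-- The `L²(ℝ)` norm `(∫ℝ |g(x)|² dx)^(1/2)`. -/
noncomputable def L2Norm (g : ℝ → ℝ) : ℝ := (∫ x : ℝ, (g x) ^ 2) ^ ((1 : ℝ) / 2)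

/-- `g ∈ L²(ℝ)`, i.e. `∫ℝ |g(x)|² dx < ∞`. -/
def MemL2 (g : ℝ → ℝ) : Prop := MeasureTheory.Integrable fun x => (g x) ^ 2

lemma integrable_mul_of_sq (f h : ℝ → ℝ) (hf : Continuous f) (hh : Continuous h)
    (hf2 : Integrable (fun x => f x ^ 2)) (hh2 : Integrable (fun x => h x ^ 2)) :
    Integrable (fun x => f x * h x) := by
  refine Integrable.mono' (((hf2.add hh2).div_const 2)) ((hf.mul hh).aestronglyMeasurable) ?_
  filter_upwards with x
  simp only [Pi.add_apply, Real.norm_eq_abs, abs_mul]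
  nlinarith [sq_nonneg (|f x| - |h x|), abs_nonneg (f x), abs_nonneg (h x), sq_abs (f x),
    sq_abs (h x)]

lemma cs (f h : ℝ → ℝ) (hf : Continuous f) (hh : Continuous h)
    (hf2 : Integrable (fun x => f x ^ 2)) (hh2 : Integrable (fun x => h x ^ 2)) :
    ∫ x : ℝ, |f x * h x| ≤ Real.sqrt (∫ x : ℝ, f x ^ 2) * Real.sqrt (∫ x : ℝ, h x ^ 2) := by
  have hpq : (2:ℝ).HolderConjugate 2 := Real.HolderConjugate.two_two
  have hfm : MemLp f 2 (volume) := (memLp_two_iff_integrable_sq hf.aestronglyMeasurable).2 hf2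
  have hhm : MemLp h 2 (volume) := (memLp_two_iff_integrable_sq hh.aestronglyMeasurable).2 hh2
  have h2 : ENNReal.ofReal (2:ℝ) = 2 := by norm_num
  have key := MeasureTheory.integral_mul_norm_le_Lp_mul_Lq hpq (h2 ▸ hfm) (h2 ▸ hhm)
  have e2 : ∀ y : ℝ, |y| ^ (2:ℝ) = y ^ 2 := fun y => by
    rw [show (2:ℝ) = ((2:ℕ):ℝ) by norm_num, Real.rpow_natCast, sq_abs]
  calc ∫ x : ℝ, |f x * h x| = ∫ x : ℝ, ‖f x‖ * ‖h x‖ := by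
        simp [Real.norm_eq_abs, abs_mul]
    _ ≤ (∫ x : ℝ, ‖f x‖ ^ (2:ℝ)) ^ ((1:ℝ)/2) * (∫ x : ℝ, ‖h x‖ ^ (2:ℝ)) ^ ((1:ℝ)/2) := key
    _ = Real.sqrt (∫ x : ℝ, f x ^ 2) * Real.sqrt (∫ x : ℝ, h x ^ 2) := by
        rw [Real.sqrt_eq_rpow, Real.sqrt_eq_rpow]
        congr 2 <;> exact integral_congr_ae (Eventually.of_forall fun x => e2 _)

lemma sup_sq_le (f : ℝ → ℝ) (hf : ContDiff ℝ 1 f)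
    (hf2 : Integrable (fun x => f x ^ 2)) (hf'2 : Integrable (fun x => deriv f x ^ 2))
    (hdec : Tendsto f (cocompact ℝ) (nhds 0)) (x : ℝ) :
    f x ^ 2 ≤ 2 * ∫ t : ℝ, |f t * deriv f t| := by
  obtain ⟨hdf, hcd⟩ := contDiff_one_iff_deriv.mp hf
  have hfc : Continuous f := hf.continuous
  have hint : Integrable (fun t : ℝ => 2 * (f t * deriv f t)) :=
    ((integrable_mul_of_sq f (deriv f) hfc hcd hf2 hf'2)).const_mul 2
  have key : ∀ y : ℝ, f x ^ 2 - f y ^ 2 = ∫ t in y..x, 2 * (f t * deriv f t) := by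
    intro y
    rw [intervalIntegral.integral_eq_sub_of_hasDerivAt (f := fun u => f u ^ 2)]
    · intro t _
      have := ((hdf t).hasDerivAt).fun_pow 2
      simpa [mul_comm, mul_assoc, mul_left_comm] using this
    · exact hint.intervalIntegrable
  have hbot : Tendsto (fun y : ℝ => f y ^ 2) atBot (nhds 0) := by
    have : Tendsto f atBot (nhds 0) :=
      hdec.mono_left (by rw [cocompact_eq_atBot_atTop]; exact le_sup_left)
    simpa using this.pow 2
  have h1 : Tendsto (fun y : ℝ => f x ^ 2 - f y ^ 2) atBot (nhds (f x ^ 2)) := by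
    simpa using (tendsto_const_nhds (x := f x ^ 2) (f := atBot)).sub hbot
  have h2 : Tendsto (fun y : ℝ => ∫ t in y..x, 2 * (f t * deriv f t)) atBot
      (nhds (∫ t in Iic x, 2 * (f t * deriv f t))) :=
    intervalIntegral_tendsto_integral_Iic x hint.integrableOn tendsto_id
  have heq : f x ^ 2 = ∫ t in Iic x, 2 * (f t * deriv f t) :=
    tendsto_nhds_unique h1 (h2.congr (fun y => (key y).symm))
  rw [heq]
  have habs : Integrable (fun t : ℝ => 2 * |f t * deriv f t|) := by
    simpa [abs_mul] using hint.abs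
  calc ∫ t in Iic x, 2 * (f t * deriv f t)
      ≤ ∫ t in Iic x, 2 * |f t * deriv f t| := by
        refine setIntegral_mono_on hint.integrableOn habs.integrableOn measurableSet_Iic ?_
        intro t _
        have := le_abs_self (f t * deriv f t)
        linarith
    _ ≤ ∫ t : ℝ, 2 * |f t * deriv f t| := by
        refine setIntegral_le_integral habs (Eventually.of_forall fun t => ?_)
        positivity
    _ = 2 * ∫ t : ℝ, |f t * deriv f t| := by rw [MeasureTheory.integral_const_mul]

lemma parts (g : ℝ → ℝ) (hg : ContDiff ℝ 2 g)
    (hA : Integrable (fun x => g x ^ 2)) (hB : Integrable (fun x => deriv g x ^ 2))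
    (hC : Integrable (fun x => deriv (deriv g) x ^ 2))
    (hdecay : Tendsto g (cocompact ℝ) (nhds 0))
    (hdecay' : Tendsto (deriv g) (cocompact ℝ) (nhds 0)) :
    (∫ x : ℝ, deriv g x ^ 2) ≤ ∫ x : ℝ, |g x * deriv (deriv g) x| := by
  have h2 : (2 : WithTop ℕ∞) = 1 + 1 := by norm_num
  obtain ⟨hdg, -, hg1⟩ := contDiff_succ_iff_deriv.mp (h2 ▸ hg)
  obtain ⟨hdf, hcF⟩ := contDiff_one_iff_deriv.mp hg1
  have hgc : Continuous g := hg.continuous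
  have hgF : Integrable (fun x => g x * deriv (deriv g) x) :=
    integrable_mul_of_sq g (deriv (deriv g)) hgc hcF hA hC
  have hint : Integrable (fun x => deriv g x ^ 2 + g x * deriv (deriv g) x) := hB.add hgF
  have key : ∀ y : ℝ, (∫ t in (-y)..y, (deriv g t ^ 2 + g t * deriv (deriv g) t))
      = g y * deriv g y - g (-y) * deriv g (-y) := by
    intro y
    rw [intervalIntegral.integral_eq_sub_of_hasDerivAt (f := fun u => g u * deriv g u)]
    · intro t _
      have := ((hdg t).hasDerivAt).fun_mul ((hdf t).hasDerivAt)
      simpa [pow_two, mul_comm, mul_assoc, mul_left_comm, add_comm] using this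
    · exact hint.intervalIntegrable
  have h1 : Tendsto (fun y : ℝ => ∫ t in (-y)..y, (deriv g t ^ 2 + g t * deriv (deriv g) t))
      atTop (nhds (∫ x : ℝ, (deriv g x ^ 2 + g x * deriv (deriv g) x))) :=
    intervalIntegral_tendsto_integral hint tendsto_neg_atTop_atBot tendsto_id
  have hgt : Tendsto g atTop (nhds 0) :=
    hdecay.mono_left (by rw [cocompact_eq_atBot_atTop]; exact le_sup_right)
  have hgb : Tendsto g atBot (nhds 0) :=
    hdecay.mono_left (by rw [cocompact_eq_atBot_atTop]; exact le_sup_left)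
  have hft : Tendsto (deriv g) atTop (nhds 0) :=
    hdecay'.mono_left (by rw [cocompact_eq_atBot_atTop]; exact le_sup_right)
  have hfb : Tendsto (deriv g) atBot (nhds 0) :=
    hdecay'.mono_left (by rw [cocompact_eq_atBot_atTop]; exact le_sup_left)
  have h2' : Tendsto (fun y : ℝ => g y * deriv g y - g (-y) * deriv g (-y)) atTop (nhds 0) := by
    have hneg : Tendsto (fun y : ℝ => -y) atTop atBot := tendsto_neg_atTop_atBot
    have := ((hgt.mul hft).sub ((hgb.comp hneg).mul (hfb.comp hneg)))
    simpa using this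
  have hzero : (∫ x : ℝ, (deriv g x ^ 2 + g x * deriv (deriv g) x)) = 0 :=
    tendsto_nhds_unique (h1.congr (fun y => key y)) h2'
  have hsplit : (∫ x : ℝ, deriv g x ^ 2) + (∫ x : ℝ, g x * deriv (deriv g) x) = 0 := by
    rw [← integral_add hB hgF]; exact hzero
  have hle : (∫ x : ℝ, deriv g x ^ 2) = - ∫ x : ℝ, g x * deriv (deriv g) x := by linarith
  rw [hle]
  calc - ∫ x : ℝ, g x * deriv (deriv g) x ≤ |∫ x : ℝ, g x * deriv (deriv g) x| :=
        neg_le_abs _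
    _ ≤ ∫ x : ℝ, |g x * deriv (deriv g) x| := by
        simpa only [Real.norm_eq_abs] using MeasureTheory.norm_integral_le_integral_norm
          (f := fun x => g x * deriv (deriv g) x) (μ := volume)

/-- estimate (3.13). If `g ∈ C²` with `g, g', g'' ∈ L²(ℝ)` and
`g, g' → 0` as `|x| → ∞`, then
`∫ |g'| |g''|² dx ≤ √2 ‖g'‖^{1/2} ‖g''‖^{5/2} ≤ √2 ‖g‖^{1/4} ‖g''‖^{11/4}`. -/
theorem quadratic_term_estimate
    (g : ℝ → ℝ) (hg : ContDiff ℝ 2 g)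
    (hL2 : MemL2 g) (hL2' : MemL2 (deriv g)) (hL2'' : MemL2 (iteratedDeriv 2 g))
    (hdecay : Tendsto g (cocompact ℝ) (nhds 0))
    (hdecay' : Tendsto (deriv g) (cocompact ℝ) (nhds 0)) :
    (∫ x : ℝ, |deriv g x| * |iteratedDeriv 2 g x| ^ 2)
        ≤ Real.sqrt 2 * L2Norm (deriv g) ^ ((1:ℝ)/2) * L2Norm (iteratedDeriv 2 g) ^ ((5:ℝ)/2)
      ∧ Real.sqrt 2 * L2Norm (deriv g) ^ ((1:ℝ)/2) * L2Norm (iteratedDeriv 2 g) ^ ((5:ℝ)/2)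
        ≤ Real.sqrt 2 * L2Norm g ^ ((1:ℝ)/4) * L2Norm (iteratedDeriv 2 g) ^ ((11:ℝ)/4) := by
  have hFd : iteratedDeriv 2 g = deriv (deriv g) := by
    rw [show (2:ℕ) = 1 + 1 from rfl, iteratedDeriv_succ, iteratedDeriv_one]
  have h21 : (2 : WithTop ℕ∞) = 1 + 1 := by norm_num
  obtain ⟨hdg, -, hg1⟩ := contDiff_succ_iff_deriv.mp (h21 ▸ hg)
  obtain ⟨hdf, hcF⟩ := contDiff_one_iff_deriv.mp hg1
  have hgc : Continuous g := hg.continuous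
  have hfc : Continuous (deriv g) := hg1.continuous
  have hA : Integrable (fun x => g x ^ 2) := hL2
  have hB : Integrable (fun x => deriv g x ^ 2) := hL2'
  have hC : Integrable (fun x => deriv (deriv g) x ^ 2) := by
    have h := hL2'; have h'' := hL2''
    rw [MemL2] at h''
    rwa [hFd] at h''
  set A := ∫ x : ℝ, g x ^ 2 with hAdef
  set B := ∫ x : ℝ, deriv g x ^ 2 with hBdef
  set C := ∫ x : ℝ, deriv (deriv g) x ^ 2 with hCdef
  have hA0 : 0 ≤ A := integral_nonneg fun x => sq_nonneg _
  have hB0 : 0 ≤ B := integral_nonneg fun x => sq_nonneg _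
  have hC0 : 0 ≤ C := integral_nonneg fun x => sq_nonneg _
  -- L2 norms in terms of A B C
  have hLg : L2Norm g = A ^ ((1:ℝ)/2) := rfl
  have hLf : L2Norm (deriv g) = B ^ ((1:ℝ)/2) := rfl
  have hLF : L2Norm (iteratedDeriv 2 g) = C ^ ((1:ℝ)/2) := by
    rw [L2Norm, hCdef]
    congr 1
    exact integral_congr_ae (Eventually.of_forall fun x => by rw [hFd])
  -- pointwise sup bound
  have hsup : ∀ x : ℝ, deriv g x ^ 2 ≤ 2 * Real.sqrt B * Real.sqrt C := by
    intro x
    have h1 := sup_sq_le (deriv g) hg1 hB hC hdecay' x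
    have h2 := cs (deriv g) (deriv (deriv g)) hfc hcF hB hC
    calc deriv g x ^ 2 ≤ 2 * ∫ t : ℝ, |deriv g t * deriv (deriv g) t| := h1
      _ ≤ 2 * (Real.sqrt B * Real.sqrt C) := by linarith
      _ = 2 * Real.sqrt B * Real.sqrt C := by ring
  set M := Real.sqrt (2 * Real.sqrt B * Real.sqrt C) with hMdef
  have hM0 : 0 ≤ M := Real.sqrt_nonneg _
  have habs : ∀ x : ℝ, |deriv g x| ≤ M := by
    intro x
    rw [hMdef, ← Real.sqrt_sq_eq_abs]
    exact Real.sqrt_le_sqrt (hsup x)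
  -- first inequality
  have step1 : (∫ x : ℝ, |deriv g x| * |iteratedDeriv 2 g x| ^ 2) ≤ M * C := by
    calc (∫ x : ℝ, |deriv g x| * |iteratedDeriv 2 g x| ^ 2)
        ≤ ∫ x : ℝ, M * deriv (deriv g) x ^ 2 := by
          refine integral_mono_of_nonneg (Eventually.of_forall fun x => by positivity)
            (hC.const_mul M) (Eventually.of_forall fun x => ?_)
          simp only [hFd]
          rw [sq_abs]
          exact mul_le_mul_of_nonneg_right (habs x) (sq_nonneg _)
      _ = M * C := by rw [MeasureTheory.integral_const_mul]
  have hMeq : M = Real.sqrt 2 * B ^ ((1:ℝ)/4) * C ^ ((1:ℝ)/4) := by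
    rw [hMdef, Real.sqrt_mul (by positivity), Real.sqrt_mul (by norm_num : (0:ℝ) ≤ 2),
      Real.sqrt_eq_rpow B, Real.sqrt_eq_rpow C,
      Real.sqrt_eq_rpow (B ^ _), Real.sqrt_eq_rpow (C ^ _),
      ← Real.rpow_mul hB0, ← Real.rpow_mul hC0]
    norm_num
  have hmid : Real.sqrt 2 * L2Norm (deriv g) ^ ((1:ℝ)/2) * L2Norm (iteratedDeriv 2 g) ^ ((5:ℝ)/2)
      = Real.sqrt 2 * B ^ ((1:ℝ)/4) * C ^ ((5:ℝ)/4) := by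
    rw [hLf, hLF, ← Real.rpow_mul hB0, ← Real.rpow_mul hC0]
    norm_num
  have hCsum : C ^ ((1:ℝ)/4) * C = C ^ ((5:ℝ)/4) := by
    nth_rewrite 2 [← Real.rpow_one C]
    rw [← Real.rpow_add' hC0 (by norm_num)]
    norm_num
  constructor
  · calc (∫ x : ℝ, |deriv g x| * |iteratedDeriv 2 g x| ^ 2) ≤ M * C := step1
      _ = Real.sqrt 2 * B ^ ((1:ℝ)/4) * C ^ ((5:ℝ)/4) := by
          rw [hMeq, ← hCsum]; ring
      _ = _ := hmid.symm
  · rw [hmid, hLg, hLF, ← Real.rpow_mul hA0, ← Real.rpow_mul hC0]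
    norm_num
    -- goal: √2 * B^{1/4} * C^{5/4} ≤ √2 * A^{1/8} * C^{11/8}
    have hBle : B ≤ A ^ ((1:ℝ)/2) * C ^ ((1:ℝ)/2) := by
      have h1 := parts g hg hA hB hC hdecay hdecay'
      have h2 := cs g (deriv (deriv g)) hgc hcF hA hC
      rw [Real.sqrt_eq_rpow, Real.sqrt_eq_rpow] at h2
      exact h1.trans h2
    have hB4 : B ^ ((1:ℝ)/4) ≤ A ^ ((1:ℝ)/8) * C ^ ((1:ℝ)/8) := by
      calc B ^ ((1:ℝ)/4) ≤ (A ^ ((1:ℝ)/2) * C ^ ((1:ℝ)/2)) ^ ((1:ℝ)/4) :=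
            Real.rpow_le_rpow hB0 hBle (by norm_num)
        _ = A ^ ((1:ℝ)/8) * C ^ ((1:ℝ)/8) := by
            rw [Real.mul_rpow (by positivity) (by positivity),
              ← Real.rpow_mul hA0, ← Real.rpow_mul hC0]
            norm_num
    have hCsum2 : C ^ ((1:ℝ)/8) * C ^ ((5:ℝ)/4) = C ^ ((11:ℝ)/8) := by
      rw [← Real.rpow_add' hC0 (by norm_num)]
      norm_num
    calc Real.sqrt 2 * B ^ ((1:ℝ)/4) * C ^ ((5:ℝ)/4)
        ≤ Real.sqrt 2 * (A ^ ((1:ℝ)/8) * C ^ ((1:ℝ)/8)) * C ^ ((5:ℝ)/4) := by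
          gcongr
      _ = Real.sqrt 2 * A ^ ((1:ℝ)/8) * C ^ ((11:ℝ)/8) := by
          rw [← hCsum2]; ring
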